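/- For every real λ with 0 < λ < 1, the period integral of the Legendre elliptic curve satisfies ∫_0^λ dx/√(x(1−x)(λ−x)) = 2·K(√λ). -/

import Mathlib

open MeasureTheory Set

private lemma inv_sqrt_eq_rpow {x : ℝ} (hx : 0 ≤ x) : (Real.sqrt x)⁻¹ = x ^ (-(1/2):ℝ) := by
  rw [Real.sqrt_eq_rpow, ← Real.rpow_neg hx]

private lemma inv_sqrt_le_inv_sqrt {a b : ℝ} (ha : 0 < a) (hab : a ≤ b) :
    (Real.sqrt b)⁻¹ ≤ (Real.sqrt a)⁻¹ :=
  inv_anti₀ (Real.sqrt_pos.mpr ha) (Real.sqrt_le_sqrt hab)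

private lemma integrableOn_of_bound {g : ℝ → ℝ} {s : Set ℝ} (hs : MeasurableSet s)
    (hg : AEStronglyMeasurable g (volume.restrict s)) {φ : ℝ → ℝ}
    (hφ : IntegrableOn φ s) (hb : ∀ x ∈ s, ‖g x‖ ≤ φ x) : IntegrableOn g s :=
  Integrable.mono' hφ hg ((ae_restrict_iff' hs).2 (Filter.Eventually.of_forall hb))

/-- The complete elliptic integral of the first kind. -/
noncomputable def Kint (x : ℝ) : ℝ :=
  ∫ t in (0:ℝ)..1, 1 / Real.sqrt ((1 - t ^ 2) * (1 - x ^ 2 * t ^ 2))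

/-- The period integral `∫_0^λ dx/√(x(1-x)(λ-x)) = 2 K(√λ)`. -/
theorem legendre_period_one (l : ℝ) (h0 : 0 < l) (h1 : l < 1) :
    (∫ x in (0:ℝ)..l, 1 / Real.sqrt (x * (1 - x) * (l - x))) =
      2 * Kint (Real.sqrt l) := by
  have h1' : (0:ℝ) < 1 - l := by linarith
  set g : ℝ → ℝ := (fun x => 1 / Real.sqrt (x * (1 - x) * (l - x))) with hg_def
  set h' : ℝ → ℝ := (fun t => 2 * (1 / Real.sqrt ((1 - t ^ 2) * (1 - l * t ^ 2)))) with hh'_def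
  have hmeasg : Measurable g := by
    have hc : Continuous fun x : ℝ => Real.sqrt (x * (1 - x) * (l - x)) := by
      fun_prop
    exact measurable_const.div hc.measurable
  -- key pointwise substitution identity
  have key : ∀ t : ℝ, 0 < t → (2 * l * t) * g (l * t ^ 2) = h' t := by
    intro t ht
    have hsq : Real.sqrt (l * t ^ 2 * (1 - l * t ^ 2) * (l - l * t ^ 2))
        = (l * t) * Real.sqrt ((1 - t ^ 2) * (1 - l * t ^ 2)) := by
      rw [show l * t ^ 2 * (1 - l * t ^ 2) * (l - l * t ^ 2)
          = (l * t) ^ 2 * ((1 - t ^ 2) * (1 - l * t ^ 2)) by ring,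
        Real.sqrt_mul (sq_nonneg _), Real.sqrt_sq (by positivity)]
    have hlt : l * t ≠ 0 := by positivity
    simp only [hg_def, hh'_def, hsq, one_div]
    rcases eq_or_ne (Real.sqrt ((1 - t ^ 2) * (1 - l * t ^ 2))) 0 with hz | hz
    · simp [hz]
    · rw [mul_inv]
      field_simp
  have rpow_int : ∀ a b : ℝ, IntervalIntegrable (fun x : ℝ => x ^ (-(1/2):ℝ)) volume a b :=
    fun a b => intervalIntegral.intervalIntegrable_rpow' (by norm_num)
  -- integrability of g on Icc 0 l
  have hIg : IntegrableOn g (Icc 0 l) := by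
    have h2 : (0:ℝ) < l / 2 := by linarith
    have I1 : IntegrableOn g (Icc 0 (l/2)) := by
      rw [integrableOn_Icc_iff_integrableOn_Ioc]
      refine integrableOn_of_bound measurableSet_Ioc hmeasg.aestronglyMeasurable.restrict
        (φ := fun x => (Real.sqrt ((1-l)*(l/2)))⁻¹ * x ^ (-(1/2):ℝ)) ?_ ?_
      · have := ((rpow_int 0 (l/2)).const_mul ((Real.sqrt ((1-l)*(l/2)))⁻¹))
        rw [intervalIntegrable_iff, uIoc_of_le h2.le] at this
        exact this
      · rintro x ⟨hx0, hx2⟩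
        have e1 : (1-l)*(l/2) ≤ (1-x)*(l-x) :=
          mul_le_mul (by linarith) (by linarith) (by linarith) (by linarith)
        have e2 := mul_le_mul_of_nonneg_left e1 hx0.le
        have hb : x * ((1-l)*(l/2)) ≤ x * (1 - x) * (l - x) := by nlinarith [e2]
        have hpos : 0 < x * ((1-l)*(l/2)) := by positivity
        have hnorm : ‖g x‖ = (Real.sqrt (x * (1 - x) * (l - x)))⁻¹ := by
          rw [hg_def]
          simp [one_div, abs_of_nonneg (inv_nonneg.2 (Real.sqrt_nonneg _))]
        rw [hnorm]
        calc (Real.sqrt (x * (1 - x) * (l - x)))⁻¹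
            ≤ (Real.sqrt (x * ((1-l)*(l/2))))⁻¹ := inv_sqrt_le_inv_sqrt hpos hb
          _ = (Real.sqrt ((1-l)*(l/2)))⁻¹ * x ^ (-(1/2):ℝ) := by
              rw [Real.sqrt_mul hx0.le, mul_inv, inv_sqrt_eq_rpow hx0.le, mul_comm]
    have I2 : IntegrableOn g (Icc (l/2) l) := by
      rw [integrableOn_Icc_iff_integrableOn_Ioc]
      refine integrableOn_of_bound measurableSet_Ioc hmeasg.aestronglyMeasurable.restrict
        (φ := fun x => (Real.sqrt ((l/2)*(1-l)))⁻¹ * (l - x) ^ (-(1/2):ℝ)) ?_ ?_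
      · have := (((rpow_int 0 (l/2)).comp_sub_left l).symm.const_mul
          ((Real.sqrt ((l/2)*(1-l)))⁻¹))
        rw [intervalIntegrable_iff, show l - 0 = l by ring,
          show l - l/2 = l/2 by ring, uIoc_of_le (by linarith : l/2 ≤ l)] at this
        exact this
      · rintro x ⟨hx2, hxl⟩
        have hnorm : ‖g x‖ = (Real.sqrt (x * (1 - x) * (l - x)))⁻¹ := by
          rw [hg_def]
          simp [one_div, abs_of_nonneg (inv_nonneg.2 (Real.sqrt_nonneg _))]
        rw [hnorm]
        rcases eq_or_lt_of_le hxl with rfl | hxl'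
        · simp [Real.zero_rpow (show (-(1/2):ℝ) ≠ 0 by norm_num)]
        · have e1 : (l/2)*(1-l) ≤ x*(1-x) :=
            mul_le_mul (by linarith) (by linarith) (by linarith) (by linarith)
          have e2 := mul_le_mul_of_nonneg_right e1 (by linarith : (0:ℝ) ≤ l - x)
          have hb : ((l/2)*(1-l)) * (l - x) ≤ x * (1 - x) * (l - x) := by nlinarith [e2]
          have hpos : 0 < ((l/2)*(1-l)) * (l - x) := by
            have hlx : (0:ℝ) < l - x := by linarith
            positivity
          calc (Real.sqrt (x * (1 - x) * (l - x)))⁻¹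
              ≤ (Real.sqrt (((l/2)*(1-l)) * (l - x)))⁻¹ := inv_sqrt_le_inv_sqrt hpos hb
            _ = (Real.sqrt ((l/2)*(1-l)))⁻¹ * (l - x) ^ (-(1/2):ℝ) := by
                rw [Real.sqrt_mul (by positivity), mul_inv,
                  inv_sqrt_eq_rpow (by linarith : (0:ℝ) ≤ l - x)]
    have := I1.union I2
    rwa [Set.Icc_union_Icc_eq_Icc (by linarith) (by linarith)] at this
  -- integrability of h' on Ioc 0 1
  have hIh' : IntegrableOn h' (Ioc 0 1) := by
    have hmeash' : Measurable h' := by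
      have hc : Continuous fun t : ℝ => Real.sqrt ((1 - t ^ 2) * (1 - l * t ^ 2)) := by
        fun_prop
      simpa [hh'_def, one_div] using (hc.measurable.inv.const_mul 2)
    refine integrableOn_of_bound measurableSet_Ioc hmeash'.aestronglyMeasurable.restrict
      (φ := fun t => (2 * (Real.sqrt (1-l))⁻¹) * (1 - t) ^ (-(1/2):ℝ)) ?_ ?_
    · have := (((rpow_int 0 1).comp_sub_left 1).symm.const_mul (2 * (Real.sqrt (1-l))⁻¹))
      rw [intervalIntegrable_iff, show (1:ℝ) - 0 = 1 by ring, show (1:ℝ) - 1 = 0 by ring,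
        uIoc_of_le (by norm_num : (0:ℝ) ≤ 1)] at this
      exact this
    · rintro t ⟨ht0, ht1⟩
      have hnorm : ‖h' t‖ = 2 * (Real.sqrt ((1 - t ^ 2) * (1 - l * t ^ 2)))⁻¹ := by
        rw [hh'_def]
        simp only [one_div, Real.norm_eq_abs]
        rw [abs_of_nonneg (by positivity)]
      rw [hnorm]
      rcases eq_or_lt_of_le ht1 with rfl | ht1'
      · simp [Real.zero_rpow (show (-(1/2):ℝ) ≠ 0 by norm_num)]
      · have ea : 1 - t ≤ 1 - t ^ 2 := by nlinarith [mul_le_mul_of_nonneg_left ht1 ht0.le]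
        have eb : 1 - l ≤ 1 - l * t ^ 2 := by
          have ht2 : t ^ 2 ≤ 1 := by nlinarith [mul_le_mul ht1 ht1 ht0.le zero_le_one]
          nlinarith [mul_le_mul_of_nonneg_left ht2 h0.le]
        have hb : (1-l) * (1 - t) ≤ (1 - t ^ 2) * (1 - l * t ^ 2) := by
          calc (1-l) * (1 - t) ≤ (1 - l * t ^ 2) * (1 - t ^ 2) :=
                mul_le_mul eb ea (by linarith) (by linarith)
            _ = (1 - t ^ 2) * (1 - l * t ^ 2) := by ring
        have hpos : 0 < (1-l) * (1 - t) := by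
          have h1t : (0:ℝ) < 1 - t := by linarith
          positivity
        calc 2 * (Real.sqrt ((1 - t ^ 2) * (1 - l * t ^ 2)))⁻¹
            ≤ 2 * (Real.sqrt ((1-l) * (1 - t)))⁻¹ := by
              have := inv_sqrt_le_inv_sqrt hpos hb
              linarith
          _ = (2 * (Real.sqrt (1-l))⁻¹) * (1 - t) ^ (-(1/2):ℝ) := by
              rw [Real.sqrt_mul h1'.le, mul_inv,
                inv_sqrt_eq_rpow (by linarith : (0:ℝ) ≤ 1 - t)]
              ring
  -- apply the substitution theorem
  have hfc : ContinuousOn (fun t : ℝ => l * t ^ 2) (Set.uIcc 0 1) := by fun_prop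
  have hff' : ∀ x ∈ Ioo (min (0:ℝ) 1) (max (0:ℝ) 1),
      HasDerivWithinAt (fun t : ℝ => l * t ^ 2) (2 * l * x) (Ioi x) x := by
    intro x _
    have hd := (hasDerivAt_pow 2 x).const_mul l
    have h2 : HasDerivAt (fun t : ℝ => l * t ^ 2) (2 * l * x) x := by
      refine hd.congr_deriv ?_
      push_cast
      ring
    exact h2.hasDerivWithinAt
  have hgc : ContinuousOn g ((fun t : ℝ => l * t ^ 2) '' Ioo (min (0:ℝ) 1) (max (0:ℝ) 1)) := by
    have hsub : (fun t : ℝ => l * t ^ 2) '' Ioo (min (0:ℝ) 1) (max (0:ℝ) 1) ⊆ Ioo 0 l := by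
      rw [show min (0:ℝ) 1 = 0 by norm_num, show max (0:ℝ) 1 = 1 by norm_num]
      rintro x ⟨t, ⟨ht0, ht1⟩, rfl⟩
      simp only [mem_Ioo]
      constructor
      · positivity
      · nlinarith [mul_lt_mul'' ht1 ht1 ht0.le ht0.le]
    refine (ContinuousOn.div continuousOn_const ?_ ?_).mono hsub
    · fun_prop
    · rintro x ⟨hx0, hxl⟩
      rw [Real.sqrt_ne_zero']
      exact mul_pos (mul_pos hx0 (by linarith)) (by linarith)
  have hg1 : IntegrableOn g ((fun t : ℝ => l * t ^ 2) '' Set.uIcc 0 1) := by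
    refine hIg.mono_set ?_
    rw [uIcc_of_le (by norm_num : (0:ℝ) ≤ 1)]
    rintro x ⟨t, ⟨ht0, ht1⟩, rfl⟩
    simp only [mem_Icc]
    constructor
    · positivity
    · nlinarith [mul_le_mul ht1 ht1 ht0 zero_le_one]
  have hg2 : IntegrableOn (fun x => (2 * l * x) • ((g ∘ fun t : ℝ => l * t ^ 2) x))
      (Set.uIcc 0 1) := by
    rw [uIcc_of_le (by norm_num : (0:ℝ) ≤ 1), integrableOn_Icc_iff_integrableOn_Ioc]
    refine hIh'.congr ?_
    refine (ae_restrict_mem measurableSet_Ioc).mono fun t ht => ?_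
    simp only [Function.comp, smul_eq_mul]
    exact (key t ht.1).symm
  have sub := intervalIntegral.integral_comp_smul_deriv''' (a := (0:ℝ)) (b := 1)
      hfc hff' hgc hg1 hg2
  rw [show l * (0:ℝ) ^ 2 = 0 by ring, show l * (1:ℝ) ^ 2 = l by ring] at sub
  calc (∫ x in (0:ℝ)..l, g x)
      = ∫ t in (0:ℝ)..1, (2 * l * t) • ((g ∘ fun t : ℝ => l * t ^ 2) t) := sub.symm
    _ = ∫ t in (0:ℝ)..1, h' t := by
        apply intervalIntegral.integral_congr_ae
        filter_upwards with t ht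
        rw [Set.uIoc_of_le (by norm_num : (0:ℝ) ≤ 1)] at ht
        simpa [Function.comp, smul_eq_mul] using key t ht.1
    _ = 2 * Kint (Real.sqrt l) := by
        rw [Kint, Real.sq_sqrt h0.le, hh'_def]
        exact intervalIntegral.integral_const_mul 2 _
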